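/- The bound S_n ≤ n cos²(π/(2n)) − 1 is achieved: take n unit vectors v_k in ℝ³ lying in a common plane through the origin with v_k = (cos((k−1)π/n), sin((k−1)π/n), 0); then with r_{ij} = (1 + v_i·v_j)/2, one has Σ_{i=1}^{n−1} r_{i,i+1} − r_{1n} = n cos²(π/(2n)) − 1. -/

import Mathlib

open scoped RealInnerProductSpace
open Real Finset

theorem bloch_cycle_bound_achieved
    (n : ℕ) (hn : 3 ≤ n) (v : ℕ → EuclideanSpace ℝ (Fin 3))
    (hv : ∀ k, v k = ![cos (((k : ℝ) - 1) * π / n), sin (((k : ℝ) - 1) * π / n), 0]) :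
    (∑ i ∈ Finset.Icc 1 (n - 1), (1 + ⟪v i, v (i + 1)⟫) / 2) - (1 + ⟪v 1, v n⟫) / 2 =
      n * cos (π / (2 * n)) ^ 2 - 1 := by
  have hn0 : (n : ℝ) ≠ 0 := by positivity
  have key : ∀ i j : ℕ, ⟪v i, v j⟫ =
      Real.cos ((((i : ℝ) - 1) * π / n) - (((j : ℝ) - 1) * π / n)) := by
    intro i j
    rw [Real.cos_sub]
    simp [PiLp.inner_apply, Fin.sum_univ_three, RCLike.inner_apply, hv i, hv j]
    ring
  have hstep : ∀ i : ℕ, ⟪v i, v (i + 1)⟫ = Real.cos (π / n) := by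
    intro i
    rw [key i (i + 1)]
    push_cast
    rw [show ((i : ℝ) - 1) * π / n - ((i : ℝ) + 1 - 1) * π / n = -(π / n) by ring,
      Real.cos_neg]
  have hlast : ⟪v 1, v n⟫ = -Real.cos (π / n) := by
    rw [key 1 n]
    push_cast
    rw [show ((1 : ℝ) - 1) * π / n - ((n : ℝ) - 1) * π / n = -(π - π / n) by
      field_simp; ring, Real.cos_neg, Real.cos_pi_sub]
  have hsum : (∑ i ∈ Finset.Icc 1 (n - 1), (1 + ⟪v i, v (i + 1)⟫) / 2)
      = (n - 1 : ℝ) * ((1 + Real.cos (π / n)) / 2) := by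
    rw [Finset.sum_congr rfl (fun i _ => by rw [hstep i]), Finset.sum_const,
      Nat.card_Icc]
    have : n - 1 + 1 - 1 = n - 1 := by omega
    rw [this, nsmul_eq_mul]
    congr 1
    have h1 : 1 ≤ n := by omega
    push_cast [Nat.cast_sub h1]
    ring
  have hcos : Real.cos (π / (2 * n)) ^ 2 = (1 + Real.cos (π / n)) / 2 := by
    have := Real.cos_sq (π / (2 * n))
    rw [this, show 2 * (π / (2 * n)) = π / n by field_simp]
    ring
  rw [hsum, hlast, hcos]
  ring
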